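/- Every positive rational number occurs in the sequence exactly once; i.e., the map n ↦ a(n) is a bijection from the positive integers to the positive rational numbers. -/

import Mathlib

theorem stmt0 (a : ℕ → ℚ) (h1 : a 1 = 1)
    (h2 : ∀ n : ℕ, 1 ≤ n → a (2 * n) = a n + 1)
    (h3 : ∀ n : ℕ, 1 ≤ n → a (2 * n + 1) = 1 / a (2 * n)) :
    Set.BijOn a {n : ℕ | 1 ≤ n} {q : ℚ | 0 < q} := by
  -- positivity
  have hpos : ∀ n : ℕ, 1 ≤ n → 0 < a n := by
    intro n
    induction n using Nat.strong_induction_on with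
    | _ n ih =>
      intro hn
      rcases Nat.even_or_odd n with ⟨k, hk⟩ | ⟨k, hk⟩
      · have hk1 : 1 ≤ k := by omega
        have hnk : n = 2 * k := by omega
        have := ih k (by omega) hk1
        rw [hnk, h2 k hk1]; linarith
      · rcases Nat.eq_or_lt_of_le hn with h | h
        · rw [← h, h1]; norm_num
        · have hk1 : 1 ≤ k := by omega
          have hnk : n = 2 * k + 1 := by omega
          have := ih k (by omega) hk1
          rw [hnk, h3 k hk1, h2 k hk1]
          positivity
  have hgt1 : ∀ k : ℕ, 1 ≤ k → 1 < a (2 * k) := by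
    intro k hk
    have := hpos k hk
    rw [h2 k hk]; linarith
  have hlt1 : ∀ k : ℕ, 1 ≤ k → a (2 * k + 1) < 1 := by
    intro k hk
    have h := hpos k hk
    rw [h3 k hk, h2 k hk]
    rw [div_lt_one (by linarith)]; linarith
  have hcases : ∀ m : ℕ, 1 ≤ m →
      m = 1 ∨ (∃ j, 1 ≤ j ∧ m = 2 * j) ∨ (∃ j, 1 ≤ j ∧ m = 2 * j + 1) := by
    intro m hm
    rcases Nat.even_or_odd m with ⟨k, hk⟩ | ⟨k, hk⟩
    · exact Or.inr (Or.inl ⟨k, by omega, by omega⟩)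
    · by_cases h : m = 1
      · exact Or.inl h
      · exact Or.inr (Or.inr ⟨k, by omega, by omega⟩)
  -- injectivity
  have hinj : ∀ s m n : ℕ, m + n ≤ s → 1 ≤ m → 1 ≤ n → a m = a n → m = n := by
    intro s
    induction s with
    | zero => intro m n hs hm hn _; omega
    | succ s ih =>
      intro m n hs hm hn heq
      rcases hcases m hm with rfl | ⟨j, hj, rfl⟩ | ⟨j, hj, rfl⟩ <;>
        rcases hcases n hn with rfl | ⟨k, hk, rfl⟩ | ⟨k, hk, rfl⟩
      · rfl
      · have := hgt1 k hk; rw [h1] at heq; linarith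
      · have := hlt1 k hk; rw [h1] at heq; linarith
      · have := hgt1 j hj; rw [h1] at heq; linarith
      · rw [h2 j hj, h2 k hk] at heq
        have : j = k := ih j k (by omega) hj hk (by linarith)
        omega
      · have := hgt1 j hj; have := hlt1 k hk; linarith
      · have := hlt1 j hj; rw [h1] at heq; linarith
      · have := hlt1 j hj; have := hgt1 k hk; linarith
      · rw [h3 j hj, h3 k hk] at heq
        have hj1 := hgt1 j hj
        have hk1 := hgt1 k hk
        have heq2 : a (2 * j) = a (2 * k) := by
          field_simp at heq; linarith
        rw [h2 j hj, h2 k hk] at heq2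
        have : j = k := ih j k (by omega) hj hk (by linarith)
        omega
  -- surjectivity
  have hsurj : ∀ s p r : ℕ, p + r ≤ s → 1 ≤ p → 1 ≤ r →
      ∃ n, 1 ≤ n ∧ a n = (p : ℚ) / r := by
    intro s
    induction s with
    | zero => intro p r hs hp hr; omega
    | succ s ih =>
      intro p r hs hp hr
      have hp0 : (0 : ℚ) < p := by exact_mod_cast hp
      have hr0 : (0 : ℚ) < r := by exact_mod_cast hr
      rcases lt_trichotomy p r with h | h | h
      · obtain ⟨n, hn, han⟩ := ih (r - p) p (by omega) (by omega) hp
        have hc : ((r - p : ℕ) : ℚ) = (r : ℚ) - p := by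
          push_cast [Nat.cast_sub h.le]; ring
        refine ⟨2 * n + 1, by omega, ?_⟩
        rw [h3 n hn, h2 n hn, han, hc]
        field_simp
        rw [sub_add_cancel, div_self hr0.ne']
      · refine ⟨1, le_refl 1, ?_⟩
        rw [h1, h]
        rw [div_self (by positivity)]
      · obtain ⟨n, hn, han⟩ := ih (p - r) r (by omega) (by omega) hr
        have hc : ((p - r : ℕ) : ℚ) = (p : ℚ) - r := by
          push_cast [Nat.cast_sub h.le]; ring
        refine ⟨2 * n, by omega, ?_⟩
        rw [h2 n hn, han, hc]
        field_simp
        ring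
  refine ⟨fun n hn => hpos n hn, fun m hm n hn heq => hinj (m + n) m n le_rfl hm hn heq, ?_⟩
  intro q hq
  have hq0 : 0 < q := hq
  have hnum : 0 < q.num := Rat.num_pos.mpr hq0
  obtain ⟨n, hn, han⟩ := hsurj (q.num.toNat + q.den) q.num.toNat q.den le_rfl
    (by omega) q.pos
  refine ⟨n, hn, ?_⟩
  rw [han]
  have : ((q.num.toNat : ℕ) : ℚ) = (q.num : ℚ) := by
    exact_mod_cast congrArg Int.cast (Int.toNat_of_nonneg hnum.le)
  rw [this, Rat.num_div_den]
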